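/- Let B be a completely nonunitary contraction on a complex Hilbert space H_B and let A be a contraction on a complex Hilbert space H_A with A ≼ B (that is, there exists a linear isometry Ω : H_A → H_B with Ω∘A = B∘Ω). Then the Hilbert space dimension of the defect space 𝔇_A is at most the Hilbert space dimension of the defect space 𝔇_B. -/

import Mathlib

open ContinuousLinearMap

universe u v

private theorem aux_card {E : Type*} [NormedAddCommGroup E] [InnerProductSpace ℂ E]
    {ιA : Type u} {ιB : Type v} {v : ιA → E} (hv : Orthonormal ℂ v)
    (b : HilbertBasis ιB ℂ E) :
    Cardinal.lift.{v} (Cardinal.mk ιA) ≤ Cardinal.lift.{u} (Cardinal.mk ιB) := by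
  classical
  have hex : ∀ i : ιA, ∃ j : ιB, (inner ℂ (v i) (b j) : ℂ) ≠ 0 := by
    intro i
    by_contra hcon
    push_neg at hcon
    have h0 : b.repr (v i) = 0 := by
      refine lp.ext (funext fun j => ?_)
      rw [b.repr_apply_apply, ← inner_conj_symm]
      simp [hcon j]
    have : v i = 0 := by
      have := congrArg b.repr.symm h0
      simpa using this
    exact hv.ne_zero i this
  cases finite_or_infinite ιB with
  | inl hfin =>
    haveI : Fintype ιB := Fintype.ofFinite ιB
    have bs : Module.Basis ιB ℂ E := b.toOrthonormalBasis.toBasis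
    haveI : FiniteDimensional ℂ E := Module.Basis.finiteDimensional_of_finite bs
    haveI : Finite ιA := hv.linearIndependent.finite
    haveI : Fintype ιA := Fintype.ofFinite ιA
    have hcard : Fintype.card ιA ≤ Fintype.card ιB := by
      calc Fintype.card ιA ≤ Module.finrank ℂ E :=
            hv.linearIndependent.fintype_card_le_finrank
        _ = Fintype.card ιB := Module.finrank_eq_card_basis bs
    simp only [Cardinal.mk_fintype, Cardinal.lift_natCast, Nat.cast_le]
    exact hcard
  | inr hinf =>
    set S : ιB → Set ιA := fun j => {i | (inner ℂ (v i) (b j) : ℂ) ≠ 0} with hS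
    have hScount : ∀ j, (S j).Countable := by
      intro j
      have hsum := hv.inner_products_summable (b j)
      have := hsum.countable_support
      refine this.mono ?_
      intro i hi
      have hi' : (inner ℂ (v i) (b j) : ℂ) ≠ 0 := hi
      simp only [Function.mem_support]
      intro h
      have h0 : (inner ℂ (v i) (b j) : ℂ) = 0 := by
        simpa [pow_eq_zero_iff, norm_eq_zero] using h
      exact hi' h0
    haveI : ∀ j, Countable (S j) := fun j => (hScount j).to_subtype
    have hemb : Nonempty (ιA ↪ Σ j : ιB, S j) := by
      refine ⟨⟨fun i => ⟨Classical.choose (hex i), ⟨i, Classical.choose_spec (hex i)⟩⟩, ?_⟩⟩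
      intro i i' h
      exact congrArg (fun p : Σ j : ιB, S j => (p.2 : ιA)) h
    have h1 : Cardinal.lift.{max u v} (Cardinal.mk ιA) ≤
        Cardinal.lift.{u} (Cardinal.mk (Σ j : ιB, S j)) := Cardinal.lift_mk_le'.mpr hemb
    haveI := hinf
    have h2 : Cardinal.mk (Σ j : ιB, S j) ≤ Cardinal.lift.{u} (Cardinal.mk ιB) := by
      rw [Cardinal.mk_sigma]
      calc (Cardinal.sum fun j => Cardinal.mk (S j))
          ≤ Cardinal.sum fun _ : ιB => (Cardinal.aleph0 : Cardinal.{u}) :=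
            Cardinal.sum_le_sum _ _ fun j => Cardinal.mk_le_aleph0
        _ = Cardinal.lift.{u} (Cardinal.mk ιB) * Cardinal.lift.{v} Cardinal.aleph0 :=
            Cardinal.sum_const _ _
        _ = Cardinal.lift.{u} (Cardinal.mk ιB) * Cardinal.aleph0 := by
            rw [Cardinal.lift_aleph0]
        _ = Cardinal.lift.{u} (Cardinal.mk ιB) := by
            apply Cardinal.mul_aleph0_eq
            exact Cardinal.aleph0_le_lift.mpr (Cardinal.aleph0_le_mk ιB)
    have h3 := h1.trans (Cardinal.lift_le.mpr h2)
    have h3' : Cardinal.lift.{max u v, u} (Cardinal.mk ιA) ≤ Cardinal.lift.{u, v} (Cardinal.mk ιB) := by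
      simpa [Cardinal.lift_lift, Cardinal.lift_id] using h3
    have h4 : Cardinal.lift.{max u v, u} (Cardinal.mk ιA) = Cardinal.lift.{v, u} (Cardinal.mk ιA) :=
      congrFun Cardinal.lift_umax.{u, v} _
    rwa [h4] at h3'

theorem stmt_2
    {HA HB : Type*}
    [NormedAddCommGroup HA] [InnerProductSpace ℂ HA] [CompleteSpace HA]
    [NormedAddCommGroup HB] [InnerProductSpace ℂ HB] [CompleteSpace HB]
    (A : HA →L[ℂ] HA) (B : HB →L[ℂ] HB)
    (hA : ‖A‖ ≤ 1) (hB : ‖B‖ ≤ 1)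
    -- `B` is completely nonunitary
    (hBcnu : ∀ Y : Submodule ℂ HB, IsClosed (Y : Set HB) →
      (∀ y ∈ Y, B y ∈ Y) → (∀ y ∈ Y, adjoint B y ∈ Y) →
      (∀ y ∈ Y, ‖B y‖ = ‖y‖) → (∀ y ∈ Y, ∃ z ∈ Y, B z = y) → Y = ⊥)
    -- `A ≼ B`
    (Ω : HA →ₗᵢ[ℂ] HB) (hΩ : ∀ x, Ω (A x) = B (Ω x))
    -- the defect operators
    (DA : HA →L[ℂ] HA) (DB : HB →L[ℂ] HB)
    (hDA : DA.IsPositive ∧ DA ∘L DA = 1 - adjoint A ∘L A)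
    (hDB : DB.IsPositive ∧ DB ∘L DB = 1 - adjoint B ∘L B)
    -- orthonormal bases of the defect spaces
    {ιA : Type u} {ιB : Type v}
    (bA : HilbertBasis ιA ℂ (LinearMap.range (DA : HA →ₗ[ℂ] HA)).topologicalClosure)
    (bB : HilbertBasis ιB ℂ (LinearMap.range (DB : HB →ₗ[ℂ] HB)).topologicalClosure) :
    Cardinal.lift.{v} (Cardinal.mk ιA) ≤ Cardinal.lift.{u} (Cardinal.mk ιB) := by
  classical
  obtain ⟨hDApos, hDAsq⟩ := hDA
  obtain ⟨hDBpos, hDBsq⟩ := hDB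
  set T : HA →L[ℂ] HB := DB ∘L Ω.toContinuousLinearMap with hTdef
  have hTapp : ∀ x : HA, T x = DB (Ω x) := fun x => rfl
  -- the defect inner ℂ product identity for `A`
  have hAd : ∀ x y : HA, (inner ℂ (DA x) (DA y) : ℂ) = inner ℂ x y - inner ℂ (A x) (A y) := by
    intro x y
    have h1 : (inner ℂ (DA x) (DA y) : ℂ) = inner ℂ x (DA (DA y)) := by
      nth_rewrite 1 [← hDApos.isSelfAdjoint.adjoint_eq]
      exact ContinuousLinearMap.adjoint_inner_left DA (DA y) x
    have h2 : DA (DA y) = y - adjoint A (A y) := by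
      have := DFunLike.congr_fun hDAsq y
      simpa using this
    rw [h1, h2, inner_sub_right, ContinuousLinearMap.adjoint_inner_right]
  have hBd : ∀ x y : HB, (inner ℂ (DB x) (DB y) : ℂ) = inner ℂ x y - inner ℂ (B x) (B y) := by
    intro x y
    have h1 : (inner ℂ (DB x) (DB y) : ℂ) = inner ℂ x (DB (DB y)) := by
      nth_rewrite 1 [← hDBpos.isSelfAdjoint.adjoint_eq]
      exact ContinuousLinearMap.adjoint_inner_left DB (DB y) x
    have h2 : DB (DB y) = y - adjoint B (B y) := by
      have := DFunLike.congr_fun hDBsq y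
      simpa using this
    rw [h1, h2, inner_sub_right, ContinuousLinearMap.adjoint_inner_right]
  have hinner : ∀ x y : HA, (inner ℂ (T x) (T y) : ℂ) = inner ℂ (DA x) (DA y) := by
    intro x y
    rw [hTapp, hTapp, hBd, ← hΩ, ← hΩ, Ω.inner_map_map, Ω.inner_map_map, hAd]
  have hnorm : ∀ x : HA, ‖T x‖ = ‖DA x‖ := by
    intro x
    have h := hinner x x
    rw [inner_self_eq_norm_sq_to_K, inner_self_eq_norm_sq_to_K] at h
    have h2 : ‖T x‖ ^ 2 = ‖DA x‖ ^ 2 := by exact_mod_cast h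
    rw [← Real.sqrt_sq (norm_nonneg (T x)), ← Real.sqrt_sq (norm_nonneg (DA x)), h2]
  have hwd : ∀ x y : HA, DA x = DA y → T x = T y := by
    intro x y hxy
    have h0 : ‖T x - T y‖ = 0 := by
      rw [← map_sub, hnorm, map_sub, hxy, sub_self, norm_zero]
    exact sub_eq_zero.mp (norm_eq_zero.mp h0)
  -- well-defined map on the range of `DA`
  have hpre0 : ∀ z : LinearMap.range (DA : HA →ₗ[ℂ] HA), ∃ x : HA, DA x = (z : HA) :=
    fun z => LinearMap.mem_range.mp z.2
  choose pre hpre using hpre0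
  set LA := (LinearMap.range (DA : HA →ₗ[ℂ] HA)).topologicalClosure with hLAdef
  set LB := (LinearMap.range (DB : HB →ₗ[ℂ] HB)).topologicalClosure with hLBdef
  let G : ↥(LinearMap.range (DA : HA →ₗ[ℂ] HA)) →ₗ[ℂ] HB :=
    { toFun := fun z => T (pre z)
      map_add' := by
        intro z w
        show T (pre (z + w)) = T (pre z) + T (pre w)
        have h1 : DA (pre (z + w)) = DA (pre z + pre w) := by
          rw [map_add, hpre, hpre, hpre, Submodule.coe_add]
        rw [hwd _ _ h1, map_add]
      map_smul' := by
        intro c z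
        show T (pre (c • z)) = c • T (pre z)
        have h1 : DA (pre (c • z)) = DA (c • pre z) := by
          rw [map_smul, hpre, hpre, Submodule.coe_smul]
        rw [hwd _ _ h1, map_smul] }
  have hGapp : ∀ x : HA, G ⟨DA x, LinearMap.mem_range_self _ x⟩ = T x := by
    intro x
    refine hwd _ _ ?_
    rw [hpre]
  have hGnorm : ∀ z : ↥(LinearMap.range (DA : HA →ₗ[ℂ] HA)), ‖G z‖ = ‖z‖ := by
    intro z
    show ‖T (pre z)‖ = ‖z‖
    rw [hnorm, hpre]
    rfl
  let Gc : ↥(LinearMap.range (DA : HA →ₗ[ℂ] HA)) →L[ℂ] HB :=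
    G.mkContinuous 1 (fun z => by rw [hGnorm, one_mul])
  have hGcapp : ∀ z, Gc z = G z := fun z => rfl
  -- the inclusion of the range into its closure
  have hle : LinearMap.range (DA : HA →ₗ[ℂ] HA) ≤ LA := Submodule.le_topologicalClosure _
  let eI : ↥(LinearMap.range (DA : HA →ₗ[ℂ] HA)) →ₗᵢ[ℂ] ↥LA := ⟨Submodule.inclusion hle, fun x => rfl⟩
  let e : ↥(LinearMap.range (DA : HA →ₗ[ℂ] HA)) →L[ℂ] ↥LA := eI.toContinuousLinearMap
  have he : IsUniformInducing e := eI.isometry.isUniformInducing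
  have hdense : DenseRange e := by
    rw [Metric.denseRange_iff]
    intro y ε hε
    have hy : (y : HA) ∈ closure ((LinearMap.range (DA : HA →ₗ[ℂ] HA) : Submodule ℂ HA) : Set HA) := by
      rw [← Submodule.topologicalClosure_coe]
      exact y.2
    rw [Metric.mem_closure_iff] at hy
    obtain ⟨x, hx, hxd⟩ := hy ε hε
    exact ⟨⟨x, hx⟩, by rwa [Subtype.dist_eq]⟩
  let J : ↥LA →L[ℂ] HB := Gc.extend e
  have hJe : ∀ z, J (e z) = Gc z := fun z =>
    ContinuousLinearMap.extend_eq Gc hdense he z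
  have hJnorm : ∀ y : ↥LA, ‖J y‖ = ‖y‖ := by
    intro y
    refine hdense.induction_on y ?_ ?_
    · exact isClosed_eq J.continuous.norm continuous_norm
    · intro z
      rw [hJe, hGcapp, hGnorm]
      rfl
  have hJmem : ∀ y : ↥LA, J y ∈ LB := by
    intro y
    refine hdense.induction_on y ?_ ?_
    · exact (Submodule.isClosed_topologicalClosure _).preimage J.continuous
    · intro z
      rw [hJe, hGcapp]
      show T (pre z) ∈ LB
      rw [hTapp]
      exact Submodule.le_topologicalClosure _ (LinearMap.mem_range_self _ (Ω (pre z)))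
  let JI : ↥LA →ₗᵢ[ℂ] HB := ⟨(J : ↥LA →ₗ[ℂ] HB), hJnorm⟩
  let w : ιA → ↥LB := fun i => ⟨JI (bA i), hJmem (bA i)⟩
  have hw : Orthonormal ℂ w := by
    rw [orthonormal_iff_ite]
    intro i j
    have hcoe : (inner ℂ (w i) (w j) : ℂ) = inner ℂ (JI (bA i)) (JI (bA j)) := rfl
    rw [hcoe, JI.inner_map_map]
    have hbA := bA.orthonormal
    rw [orthonormal_iff_ite] at hbA
    exact hbA i j
  exact aux_card hw bB
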